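/- Let A be an admissible linear chain, let B be the admissible chain with e(B) = 1 − e(Aᵀ) (i.e. B = A*), and let m, n be positive integers such that A ∗ TWₘ = TWₙ ∗ A. Then m = n and A = TWₙ^{∗ r(B)}, the r(B)-fold ∗-product of TWₙ with itself. -/

import Mathlib

/-- The tridiagonal matrix associated to a linear chain `A = [a₁,…,a_r]`:
diagonal entries `aᵢ`, entries `-1` immediately above/below the diagonal, `0` elsewhere. -/
def chainMatrix (A : List ℤ) : Matrix (Fin A.length) (Fin A.length) ℤ :=
  fun i j =>
    if i = j then A.get i
    else if (i : ℕ) + 1 = (j : ℕ) ∨ (j : ℕ) + 1 = (i : ℕ) then -1 else 0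

/-- The discriminant `d(A)` of a linear chain: the determinant of `chainMatrix A`
(the `0 × 0` determinant being `1` for the empty list). -/
def disc (A : List ℤ) : ℤ := (chainMatrix A).det

/-- A linear chain is admissible if it is nonempty and all of its entries are `≥ 2`. -/
def Admissible (A : List ℤ) : Prop := A ≠ [] ∧ ∀ a ∈ A, 2 ≤ a

/-- The inductance `e(A) = d(A̅)/d(A)` of a linear chain, as a rational number. -/
def inductance (A : List ℤ) : ℚ := (disc A.tail : ℚ) / (disc A : ℚ)

/-- `TW n`: the list consisting of `n` copies of the integer `2`. -/
def TW (n : ℕ) : List ℤ := List.replicate n 2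

/-- The `∗`-product of two (nonempty) integer lists:
`[a₁,…,a_r] ∗ [b₁,…,b_s] = [a₁,…,a_{r−1}, a_r + b₁ − 1, b₂,…,b_s]`. -/
def sprod (A B : List ℤ) : List ℤ :=
  A.dropLast ++ (A.getLast! + B.head! - 1) :: B.tail

/-- `sprodPow L n` is the `n`-fold `∗`-product `L ∗ ⋯ ∗ L` for `n ≥ 1`
(with the convention `sprodPow L 0 = L`). -/
def sprodPow (L : List ℤ) : ℕ → List ℤ
  | 0 => L
  | n + 1 => if n = 0 then L else sprod (sprodPow L n) L

lemma disc_nil : disc [] = 1 := by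
  simp [disc, Matrix.det_fin_zero]

lemma disc_singleton (a : ℤ) : disc [a] = a := by
  simp [disc, Matrix.det_fin_one, chainMatrix]


def tmat (f : ℕ → ℤ) (n : ℕ) : Matrix (Fin n) (Fin n) ℤ :=
  fun i j =>
    if (i : ℕ) = (j : ℕ) then f i
    else if (i : ℕ) + 1 = (j : ℕ) ∨ (j : ℕ) + 1 = (i : ℕ) then -1 else 0

lemma chainMatrix_eq (A : List ℤ) :
    chainMatrix A = tmat (fun k => A.getD k 0) A.length := by
  funext i j
  simp only [chainMatrix, tmat, Fin.ext_iff]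
  rcases eq_or_ne (i : ℕ) (j : ℕ) with hij | hij
  · rw [if_pos hij, if_pos hij, List.getD_eq_getElem _ _ i.isLt]
    rfl
  · rw [if_neg hij, if_neg hij]

lemma tmat_det_rec (n : ℕ) (f : ℕ → ℤ) :
    (tmat f (n + 2)).det =
      f 0 * (tmat (fun k => f (k + 1)) (n + 1)).det
        - (tmat (fun k => f (k + 2)) n).det := by
  have hsub0 : (tmat f (n+2)).submatrix Fin.succ ((0 : Fin (n+2)).succAbove)
      = tmat (fun k => f (k+1)) (n+1) := by
    funext i j
    simp only [Matrix.submatrix_apply, Fin.succAbove_zero, tmat, Fin.val_succ]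
    rcases eq_or_ne (i : ℕ) (j : ℕ) with hij | hij
    · rw [if_pos (by omega), if_pos hij]
    · rw [if_neg (by omega), if_neg hij]
      congr 1
      exact propext (by omega)
  have hsa1 : ∀ c : Fin (n+1), (((Fin.succ (0 : Fin (n+1))).succAbove c) : ℕ)
      = if (c : ℕ) < 1 then (c : ℕ) else (c : ℕ) + 1 := by
    intro c
    rw [Fin.succAbove]
    split <;> rename_i hc
    · rw [if_pos]; · rfl
      · simpa [Fin.lt_def] using hc
    · rw [if_neg]; · rfl
      · simpa [Fin.lt_def] using hc
  rw [Matrix.det_succ_row_zero, Fin.sum_univ_succ, Fin.sum_univ_succ]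
  have hz : ∀ j : Fin n, tmat f (n+2) 0 j.succ.succ = 0 := by
    intro j
    simp only [tmat, Fin.val_succ, Fin.val_zero]
    split_ifs <;> simp_all [Fin.val_succ] <;> omega

  rw [Finset.sum_eq_zero (fun j _ => by rw [hz j]; ring)]
  have h00 : tmat f (n+2) 0 0 = f 0 := by simp [tmat]
  have h01 : tmat f (n+2) 0 ((0 : Fin (n+1)).succ) = -1 := by
    have hv : (((0 : Fin (n+1)).succ : Fin (n+2)) : ℕ) = 1 := by simp [Fin.val_succ]
    simp only [tmat, hv, Fin.val_zero]
    norm_num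
  rw [h00, h01, hsub0]
  -- now handle the (0,1) minor
  set N := (tmat f (n+2)).submatrix Fin.succ ((0 : Fin (n+1)).succ).succAbove with hN
  have hsucc01 : (((0 : Fin (n+1)).succ : Fin (n+2)) : ℕ) = 1 := rfl
  have hNdet : N.det = - (tmat (fun k => f (k+2)) n).det := by
    have hcol : ∀ i : Fin (n+1), N i 0 = if (i : ℕ) = 0 then -1 else 0 := by
      intro i
      have h0 : (((Fin.succ (0 : Fin (n+1))).succAbove (0 : Fin (n+1))) : ℕ) = 0 := by
        have := hsa1 (0 : Fin (n+1))
        simpa using this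
      simp only [hN, Matrix.submatrix_apply, tmat, Fin.val_succ, h0]
      rcases Nat.eq_zero_or_pos (i : ℕ) with hi | hi
      · rw [if_neg (show ¬((i:ℕ)+1 = 0) by omega), if_pos (show (i:ℕ)+1+1 = 0 ∨ 0+1 = (i:ℕ)+1 by omega), if_pos hi]
      · rw [if_neg (show ¬((i:ℕ)+1 = 0) by omega), if_neg (show ¬((i:ℕ)+1+1 = 0 ∨ 0+1 = (i:ℕ)+1) by omega), if_neg (show ¬((i:ℕ) = 0) by omega)]
    rw [Matrix.det_succ_column_zero, Fin.sum_univ_succ]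
    rw [Finset.sum_eq_zero (fun i _ => by
      rw [hcol i.succ]
      rw [if_neg (by simp [Fin.val_succ])]
      ring)]
    have hcol0 : N 0 0 = -1 := by rw [hcol 0]; simp
    rw [hcol0]
    have hsub : N.submatrix ((0 : Fin (n+1)).succAbove) Fin.succ
        = tmat (fun k => f (k+2)) n := by
      funext i j
      have hcolval : (((Fin.succ (0 : Fin (n+1))).succAbove j.succ) : ℕ) = (j : ℕ) + 2 := by
        rw [hsa1 j.succ]
        simp [Fin.val_succ]
      simp only [hN, Matrix.submatrix_apply, Fin.succAbove_zero, tmat, Fin.val_succ, hcolval]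
      rcases eq_or_ne (i : ℕ) (j : ℕ) with hij | hij
      · rw [if_pos (by omega), if_pos hij]
      · rw [if_neg (by omega), if_neg hij]
        congr 1
        exact propext (by omega)
    rw [hsub]
    simp
  rw [hNdet, hsucc01]
  simp only [Fin.val_zero, pow_zero, pow_one]
  ring

lemma disc_cons (a b : ℤ) (t : List ℤ) :
    disc (a :: b :: t) = a * disc (b :: t) - disc t := by
  unfold disc
  rw [chainMatrix_eq (a :: b :: t), chainMatrix_eq (b :: t), chainMatrix_eq t]
  have h := tmat_det_rec t.length (fun k => (a :: b :: t).getD k 0)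
  simp only [List.length_cons] at *
  rw [h]
  have h1 : (fun k => (a :: b :: t).getD (k + 1) 0) = (fun k => (b :: t).getD k 0) := by
    funext k; rfl
  have h2 : (fun k => (a :: b :: t).getD (k + 2) 0) = (fun k => t.getD k 0) := by
    funext k; rfl
  rw [h1, h2]
  rfl

/-! ### getLast! API -/

lemma getLast!_eq_getLast (l : List ℤ) (h : l ≠ []) : l.getLast! = l.getLast h := by
  cases l with
  | nil => exact absurd rfl h
  | cons a t => rfl

lemma getLast!_concat (l : List ℤ) (a : ℤ) : (l ++ [a]).getLast! = a := by
  rw [getLast!_eq_getLast _ (by simp)]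
  exact List.getLast_concat

lemma getLast!_mem (l : List ℤ) (h : l ≠ []) : l.getLast! ∈ l := by
  rw [getLast!_eq_getLast _ h]; exact List.getLast_mem h

lemma eq_dropLast_concat_getLast! (l : List ℤ) (h : l ≠ []) :
    l = l.dropLast ++ [l.getLast!] := by
  rw [getLast!_eq_getLast _ h, List.dropLast_append_getLast]

/-! ### more disc lemmas -/

lemma disc_concat (a : ℤ) (l : List ℤ) (hl : l ≠ []) :
    disc (l ++ [a]) = a * disc l - disc l.dropLast := by
  have H : ∀ (k : ℕ) (l : List ℤ), l.length ≤ k → l ≠ [] →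
      disc (l ++ [a]) = a * disc l - disc l.dropLast := by
    intro k
    induction k with
    | zero => intro l hlen hne; cases l with
        | nil => exact absurd rfl hne
        | cons b t => simp at hlen
    | succ k ih =>
      intro l hlen hne
      match l with
      | [b] =>
        show disc [b, a] = _
        rw [disc_cons b a [], disc_singleton, disc_singleton]
        simp [disc_nil, List.dropLast]
        ring
      | b :: c :: t =>
        have hshape : (b :: c :: t) ++ [a] = b :: c :: (t ++ [a]) := by simp
        rw [hshape, disc_cons]
        cases t with
        | nil =>
          simp only [List.nil_append]
          rw [disc_cons c a [], disc_cons b c []]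
          simp [disc_singleton, disc_nil, List.dropLast]
          ring
        | cons d t' =>
          have h1 : disc (c :: d :: t' ++ [a]) = a * disc (c :: d :: t') - disc ((c :: d :: t').dropLast) := by
            have := ih (c :: d :: t') (by simp at hlen ⊢; omega) (by simp)
            simpa using this
          have h2 : disc (d :: t' ++ [a]) = a * disc (d :: t') - disc ((d :: t').dropLast) := by
            have := ih (d :: t') (by simp at hlen ⊢; omega) (by simp)
            simpa using this
          rw [show c :: (d :: t' ++ [a]) = (c :: d :: t') ++ [a] by simp, h1]
          rw [show d :: t' ++ [a] = (d :: t') ++ [a] by simp, h2]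
          have hd1 : (b :: c :: d :: t').dropLast = b :: (c :: d :: t').dropLast := by
            simp [List.dropLast]
          rw [disc_cons b c (d :: t'), hd1]
          have hd2 : (c :: d :: t').dropLast = c :: (d :: t').dropLast := by
            simp [List.dropLast]
          rw [hd2]
          cases t' with
          | nil =>
            simp only [List.dropLast]
            rw [disc_cons b c [], disc_singleton, disc_singleton]
            simp [disc_nil]
            ring
          | cons e s =>
            have hd3 : (d :: e :: s).dropLast = d :: (e :: s).dropLast := by
              simp [List.dropLast]
            rw [hd3, disc_cons b c (d :: (e :: s).dropLast)]
            ring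
  exact H l.length l le_rfl hl

lemma disc_reverse (l : List ℤ) : disc l.reverse = disc l := by
  have H : ∀ (k : ℕ) (l : List ℤ), l.length ≤ k → disc l.reverse = disc l := by
    intro k
    induction k with
    | zero =>
      intro l h
      have : l = [] := by cases l with
        | nil => rfl
        | cons a t => simp at h
      rw [this]
      rfl
    | succ k ih =>
      intro l hlen
      match l with
      | [] => rfl
      | [a] => rfl
      | a :: b :: t =>
        have hrev : (a :: b :: t).reverse = (b :: t).reverse ++ [a] := by simp
        rw [hrev, disc_concat a _ (by simp), ih (b :: t) (by simp at hlen ⊢; omega)]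
        have hdl : (b :: t).reverse.dropLast = t.reverse := by
          rw [List.reverse_cons, List.dropLast_concat]
        rw [hdl, ih t (by simp at hlen ⊢; omega), disc_cons]
  exact H l.length l le_rfl

lemma disc_replicate_pair (c : ℤ) :
    ∀ j : ℕ, disc (List.replicate (j+2) c)
      = c * disc (List.replicate (j+1) c) - disc (List.replicate j c) := by
  intro j
  have : List.replicate (j+2) c = c :: c :: List.replicate j c := by
    simp [List.replicate_succ]
  rw [this, disc_cons,
    show (c :: List.replicate j c) = List.replicate (j+1) c from (List.replicate_succ (a := c) (n := j)).symm]

lemma disc_replicate_two : ∀ j : ℕ, disc (List.replicate j (2:ℤ)) = j + 1 := by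
  have H : ∀ j : ℕ, disc (List.replicate j (2:ℤ)) = j + 1 ∧
      disc (List.replicate (j+1) (2:ℤ)) = j + 2 := by
    intro j
    induction j with
    | zero =>
      constructor
      · simpa using disc_nil
      · simpa [List.replicate_succ] using disc_singleton 2
    | succ j ih =>
      refine ⟨by rw [ih.2]; push_cast; ring, ?_⟩
      rw [disc_replicate_pair 2 j, ih.1, ih.2]
      push_cast; ring
  exact fun j => (H j).1

lemma admissible_tail (a : ℤ) (t : List ℤ) (h : Admissible (a :: t)) (ht : t ≠ []) :
    Admissible t :=
  ⟨ht, fun x hx => h.2 x (List.mem_cons_of_mem a hx)⟩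

lemma admissible_disc : ∀ (l : List ℤ), Admissible l →
    0 < disc l.tail ∧ disc l.tail < disc l ∧ IsCoprime (disc l) (disc l.tail) := by
  have H : ∀ (k : ℕ) (l : List ℤ), l.length ≤ k → Admissible l →
      0 < disc l.tail ∧ disc l.tail < disc l ∧ IsCoprime (disc l) (disc l.tail) := by
    intro k
    induction k with
    | zero => intro l hlen hl; exact absurd (List.length_eq_zero_iff.mp (by omega)) hl.1
    | succ k ih =>
      intro l hlen hl
      match l with
      | [a] =>
        have ha : 2 ≤ a := hl.2 a (by simp)
        refine ⟨by simp [disc_nil], ?_, ?_⟩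
        · simp [disc_nil, disc_singleton]; omega
        · simp [disc_singleton, disc_nil]
          exact isCoprime_one_right
      | a :: b :: t =>
        have ha : 2 ≤ a := hl.2 a (by simp)
        obtain ⟨h1, h2, h3⟩ := ih (b :: t) (by simp at hlen ⊢; omega)
          (admissible_tail a (b :: t) hl (by simp))
        set dt := disc (b :: t)
        set dtt := disc (b :: t).tail
        have hrec : disc (a :: b :: t) = a * dt - dtt := disc_cons a b t
        have hdtpos : 0 < dt := lt_trans h1 h2
        refine ⟨hdtpos, ?_, ?_⟩
        · show dt < disc (a :: b :: t)
          rw [hrec]; nlinarith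
        · show IsCoprime (disc (a :: b :: t)) dt
          rw [hrec]
          have : IsCoprime (-dtt + dt * a) dt := (h3.symm.neg_left).add_mul_left_left a
          have heq : -dtt + dt * a = a * dt - dtt := by ring
          rwa [heq] at this
  intro l hl; exact H l.length l le_rfl hl

lemma admissible_disc_pos (l : List ℤ) (hl : Admissible l) : 0 < disc l :=
  lt_trans (admissible_disc l hl).1 (admissible_disc l hl).2.1

lemma admissible_eq_of_disc_eq (l₁ l₂ : List ℤ) (h₁ : Admissible l₁) (h₂ : Admissible l₂)
    (hind : inductance l₁ = inductance l₂) :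
    disc l₁ = disc l₂ ∧ disc l₁.tail = disc l₂.tail := by
  obtain ⟨p1, q1, c1⟩ := admissible_disc l₁ h₁
  obtain ⟨p2, q2, c2⟩ := admissible_disc l₂ h₂
  have d1pos : 0 < disc l₁ := lt_trans p1 q1
  have d2pos : 0 < disc l₂ := lt_trans p2 q2
  have hne1 : ((disc l₁ : ℚ)) ≠ 0 := by exact_mod_cast d1pos.ne'
  have hne2 : ((disc l₂ : ℚ)) ≠ 0 := by exact_mod_cast d2pos.ne'
  rw [inductance, inductance, div_eq_div_iff hne1 hne2] at hind
  have hcross : disc l₁.tail * disc l₂ = disc l₂.tail * disc l₁ := by exact_mod_cast hind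
  have hdvd12 : disc l₁ ∣ disc l₂ := by
    apply c1.dvd_of_dvd_mul_left
    exact ⟨disc l₂.tail, by linarith [hcross]⟩
  have hdvd21 : disc l₂ ∣ disc l₁ := by
    apply c2.dvd_of_dvd_mul_left
    exact ⟨disc l₁.tail, by linarith [hcross]⟩
  have hd : disc l₁ = disc l₂ := Int.dvd_antisymm d1pos.le d2pos.le hdvd12 hdvd21
  refine ⟨hd, ?_⟩
  have := hcross
  rw [hd] at this
  exact mul_right_cancel₀ d2pos.ne' this

lemma admissible_inductance_inj : ∀ (l₁ l₂ : List ℤ), Admissible l₁ → Admissible l₂ →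
    inductance l₁ = inductance l₂ → l₁ = l₂ := by
  have H : ∀ (k : ℕ) (l₁ l₂ : List ℤ), l₁.length ≤ k → Admissible l₁ → Admissible l₂ →
      inductance l₁ = inductance l₂ → l₁ = l₂ := by
    intro k
    induction k with
    | zero => intro l₁ l₂ hlen h₁ _ _; exact absurd (List.length_eq_zero_iff.mp (by omega)) h₁.1
    | succ k ih =>
      intro l₁ l₂ hlen h₁ h₂ hind
      obtain ⟨hd, hdt⟩ := admissible_eq_of_disc_eq l₁ l₂ h₁ h₂ hind
      match l₁, l₂ with
      | [a], [b] =>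
        simp only [disc_singleton] at hd
        rw [hd]
      | [a], b :: c :: s =>
        exfalso
        obtain ⟨p2, q2, -⟩ := admissible_disc (c :: s)
          (admissible_tail b (c :: s) h₂ (by simp))
        simp only [List.tail_cons, disc_nil] at hdt
        omega
      | a :: c :: s, [b] =>
        exfalso
        obtain ⟨p1, q1, -⟩ := admissible_disc (c :: s)
          (admissible_tail a (c :: s) h₁ (by simp))
        simp only [List.tail_cons, disc_nil] at hdt
        omega
      | a :: c :: s, b :: d :: u =>
        simp only [List.tail_cons] at hd hdt
        obtain ⟨p1, q1, -⟩ := admissible_disc (c :: s)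
          (admissible_tail a (c :: s) h₁ (by simp))
        obtain ⟨p2, q2, -⟩ := admissible_disc (d :: u)
          (admissible_tail b (d :: u) h₂ (by simp))
        simp only [List.tail_cons] at p1 q1 p2 q2
        rw [disc_cons, disc_cons] at hd
        rw [hdt] at hd q1
        have hE : 0 < disc (d :: u) := lt_trans p2 q2
        have hab : a = b := by
          rcases lt_trichotomy a b with hab | hab | hab
          · exfalso
            nlinarith [mul_le_mul_of_nonneg_right (show (1:ℤ) ≤ b - a from by omega) hE.le]
          · exact hab
          · exfalso
            nlinarith [mul_le_mul_of_nonneg_right (show (1:ℤ) ≤ a - b from by omega) hE.le]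
        subst hab
        have htt : disc s = disc u := by linarith
        have : (c :: s) = (d :: u) := by
          apply ih (c :: s) (d :: u) (by simp at hlen ⊢; omega)
            (admissible_tail a (c :: s) h₁ (by simp))
            (admissible_tail a (d :: u) h₂ (by simp))
          unfold inductance
          simp only [List.tail_cons]
          rw [htt, hdt]
        rw [this]
  intro l₁ l₂ h₁ h₂ hind
  exact H l₁.length l₁ l₂ le_rfl h₁ h₂ hind

/-! ### sprod lemmas -/

lemma getLast!_singleton (a : ℤ) : [a].getLast! = a := by
  simpa using getLast!_concat [] a

lemma getLast!_cons (a : ℤ) (t : List ℤ) (ht : t ≠ []) :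
    (a :: t).getLast! = t.getLast! := by
  rw [getLast!_eq_getLast (a :: t) (by simp), getLast!_eq_getLast t ht,
    List.getLast_cons ht]

lemma sprod_ne_nil (A B : List ℤ) : sprod A B ≠ [] := by simp [sprod]

lemma length_sprod (A B : List ℤ) (hA : A ≠ []) (hB : B ≠ []) :
    (sprod A B).length + 1 = A.length + B.length := by
  have h1 : 1 ≤ A.length := List.length_pos_iff.mpr hA
  have h2 : 1 ≤ B.length := List.length_pos_iff.mpr hB
  simp [sprod, List.length_dropLast, List.length_tail]
  omega

lemma cons_sprod (a : ℤ) (t B : List ℤ) (ht : t ≠ []) :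
    sprod (a :: t) B = a :: sprod t B := by
  unfold sprod
  obtain ⟨b, t', rfl⟩ := List.exists_cons_of_ne_nil ht
  rw [getLast!_cons a (b :: t') (by simp)]
  simp [List.dropLast]

lemma tail_sprod (A B : List ℤ) (h : A.tail ≠ []) :
    (sprod A B).tail = sprod A.tail B := by
  cases A with
  | nil => simp at h
  | cons a t =>
    simp only [List.tail_cons] at h ⊢
    rw [cons_sprod a t B h, List.tail_cons]

lemma sprod_singleton (c : ℤ) (b : ℤ) (s : List ℤ) :
    sprod [c] (b :: s) = (c + b - 1) :: s := by
  unfold sprod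
  rw [getLast!_singleton]
  simp

/-! ### TW lemmas -/

lemma TW_ne_nil (n : ℕ) (hn : 1 ≤ n) : TW n ≠ [] := by
  unfold TW
  intro h
  have := congrArg List.length h
  simp at this
  omega

lemma head!_TW (n : ℕ) (hn : 1 ≤ n) : (TW n).head! = 2 := by
  obtain ⟨j, rfl⟩ : ∃ j, n = j + 1 := ⟨n - 1, by omega⟩
  rfl

lemma tail_TW (n : ℕ) : (TW n).tail = List.replicate (n-1) (2:ℤ) :=
  List.tail_replicate (n := n) (a := 2)

lemma dropLast_replicate (j : ℕ) (a : ℤ) :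
    (List.replicate j a).dropLast = List.replicate (j-1) a := by
  cases j with
  | zero => rfl
  | succ j => rw [List.replicate_succ', List.dropLast_concat]; simp

lemma dropLast_TW (n : ℕ) : (TW n).dropLast = List.replicate (n-1) (2:ℤ) :=
  dropLast_replicate n 2

lemma getLast!_TW (n : ℕ) (hn : 1 ≤ n) : (TW n).getLast! = 2 := by
  obtain ⟨j, rfl⟩ : ∃ j, n = j + 1 := ⟨n - 1, by omega⟩
  unfold TW
  rw [List.replicate_succ', getLast!_concat]

lemma disc_TW (n : ℕ) : disc (TW n) = n + 1 := disc_replicate_two n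

lemma dropLast_sprod_TW (A : List ℤ) (p : ℕ) :
    (sprod A (TW (p+2))).dropLast = sprod A (TW (p+1)) := by
  unfold sprod
  rw [tail_TW, tail_TW, head!_TW _ (by omega), head!_TW _ (by omega)]
  have h1 : (p + 2 - 1) = p + 1 := rfl
  have h2 : (p + 1 - 1) = p := rfl
  rw [h1, h2, List.replicate_succ']
  rw [show A.dropLast ++ (A.getLast! + 2 - 1) :: (List.replicate p (2:ℤ) ++ [2])
      = (A.dropLast ++ (A.getLast! + 2 - 1) :: List.replicate p (2:ℤ)) ++ [2] by simp,
    List.dropLast_concat]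

/-! ### disc of sprod -/

lemma disc_sprod : ∀ (A B : List ℤ), A ≠ [] → B ≠ [] →
    disc (sprod A B) = disc A * disc B.tail + disc B * disc A.dropLast
      - disc A.dropLast * disc B.tail := by
  have H : ∀ (k : ℕ) (A B : List ℤ), A.length ≤ k → A ≠ [] → B ≠ [] →
      disc (sprod A B) = disc A * disc B.tail + disc B * disc A.dropLast
        - disc A.dropLast * disc B.tail := by
    intro k
    induction k with
    | zero => intro A B hlen hA hB; exact absurd (List.length_eq_zero_iff.mp (by omega)) hA
    | succ k ih =>
      intro A B hlen hA hB
      obtain ⟨b, s, rfl⟩ := List.exists_cons_of_ne_nil hB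
      match A with
      | [a] =>
        rw [sprod_singleton]
        cases s with
        | nil =>
          simp only [List.tail_cons, List.dropLast_singleton]
          rw [disc_singleton, disc_singleton, disc_singleton, disc_nil]
          ring
        | cons c s' =>
          rw [disc_cons (a + b - 1) c s', disc_cons b c s']
          simp only [List.tail_cons, List.dropLast_singleton]
          rw [disc_singleton, disc_nil]
          ring
      | a :: c :: t =>
        rw [cons_sprod a (c :: t) (b :: s) (by simp)]
        cases t with
        | nil =>
          rw [sprod_singleton, disc_cons a (c + b - 1) s]
          have hic := ih [c] (b :: s) (by simp at hlen ⊢; omega) (by simp) (by simp)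
          rw [sprod_singleton] at hic
          rw [hic]
          simp only [List.tail_cons, List.dropLast_singleton]
          rw [disc_cons a c [], disc_singleton,
            show (a :: c :: ([] : List ℤ)).dropLast = [a] from rfl, disc_singleton, disc_nil]
          ring
        | cons d t' =>
          rw [cons_sprod c (d :: t') (b :: s) (by simp)]
          have h1 := ih (c :: d :: t') (b :: s) (by simp at hlen ⊢; omega) (by simp) (by simp)
          have h2 := ih (d :: t') (b :: s) (by simp at hlen ⊢; omega) (by simp) (by simp)
          rw [cons_sprod c (d :: t') (b :: s) (by simp)] at h1
          obtain ⟨y, rest, hy⟩ := List.exists_cons_of_ne_nil (sprod_ne_nil (d :: t') (b :: s))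
          rw [hy] at h1 ⊢
          rw [disc_cons a c (y :: rest), h1, ← hy, h2]
          -- now handle RHS structure
          rw [disc_cons a c (d :: t')]
          have hdl1 : (a :: c :: d :: t').dropLast = a :: c :: (d :: t').dropLast := by
            simp [List.dropLast]
          rw [hdl1]
          have hdl2 : (c :: d :: t').dropLast = c :: (d :: t').dropLast := by
            simp [List.dropLast]
          rw [hdl2] at h1 ⊢
          cases hdd : (d :: t').dropLast with
          | nil =>
            rw [disc_cons a c [], disc_singleton, disc_nil]
            ring
          | cons z zs =>
            rw [disc_cons a c (z :: zs)]
            ring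
  intro A B hA hB
  exact H A.length A B le_rfl hA hB

/-! ### sprodPow -/

lemma sprodPow_one (L : List ℤ) : sprodPow L 1 = L := by simp [sprodPow]

lemma sprodPow_succ (L : List ℤ) (k : ℕ) (hk : 1 ≤ k) :
    sprodPow L (k + 1) = sprod (sprodPow L k) L := by
  have : k ≠ 0 := by omega
  simp [sprodPow, this]

def Rfun (c : ℤ) : ℕ → ℤ
  | 0 => 0
  | j + 1 => disc (List.replicate j c)

lemma disc_replicate_rec (c : ℤ) (j : ℕ) :
    disc (List.replicate (j+1) c) = c * disc (List.replicate j c) - Rfun c j := by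
  cases j with
  | zero => simp [Rfun, disc_nil, List.replicate_succ, disc_singleton]
  | succ j => rw [disc_replicate_pair c j]; rfl

lemma sprodPow_TW_facts (p : ℕ) : ∀ j : ℕ,
    sprodPow (TW (p+2)) (j+1) ≠ [] ∧
    (sprodPow (TW (p+2)) (j+1)).tail ≠ [] ∧
    disc (sprodPow (TW (p+2)) (j+1)) = disc (List.replicate (j+1) ((p:ℤ)+3)) ∧
    disc (sprodPow (TW (p+2)) (j+1)).tail
      = disc (List.replicate (j+1) ((p:ℤ)+3)) - disc (List.replicate j ((p:ℤ)+3)) ∧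
    disc (sprodPow (TW (p+2)) (j+1)).dropLast
      = disc (List.replicate (j+1) ((p:ℤ)+3)) - disc (List.replicate j ((p:ℤ)+3)) ∧
    disc (sprodPow (TW (p+2)) (j+1)).tail.dropLast
      = disc (List.replicate (j+1) ((p:ℤ)+3)) - 2 * disc (List.replicate j ((p:ℤ)+3))
        + Rfun ((p:ℤ)+3) j := by
  intro j
  induction j with
  | zero =>
    rw [sprodPow_one]
    have hTW : TW (p+2) = List.replicate (p+2) (2:ℤ) := rfl
    have htail : (TW (p+2)).tail = List.replicate (p+1) (2:ℤ) := tail_TW (p+2)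
    have hdrop : (TW (p+2)).dropLast = List.replicate (p+1) (2:ℤ) := dropLast_TW (p+2)
    have htd : (TW (p+2)).tail.dropLast = List.replicate p (2:ℤ) := by
      rw [htail, dropLast_replicate]; simp
    have hQ1 : disc (List.replicate 1 ((p:ℤ)+3)) = (p:ℤ)+3 := by
      simp [List.replicate_succ, disc_singleton]
    have hQ0 : disc (List.replicate 0 ((p:ℤ)+3)) = 1 := disc_nil
    simp only [Nat.zero_add]
    refine ⟨TW_ne_nil _ (by omega), ?_, ?_, ?_, ?_, ?_⟩
    · rw [htail]
      intro hh
      have := congrArg List.length hh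
      simp at this
    · rw [hQ1, disc_TW]; push_cast; ring
    · rw [htail, hQ1, hQ0, disc_replicate_two]; push_cast; ring
    · rw [hdrop, hQ1, hQ0, disc_replicate_two]; push_cast; ring
    · rw [htd, hQ1, hQ0, disc_replicate_two, Rfun]; push_cast; ring
  | succ j ih =>
    obtain ⟨hne, htne, hu, hv, hw, hx⟩ := ih
    set A := sprodPow (TW (p+2)) (j+1) with hAdef
    have hstep : sprodPow (TW (p+2)) (j+2) = sprod A (TW (p+2)) :=
      sprodPow_succ _ (j+1) (by omega)
    have hTWne : TW (p+2) ≠ [] := TW_ne_nil _ (by omega)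
    have hTWne' : TW (p+1) ≠ [] := TW_ne_nil _ (by omega)
    have hdiscTW : disc (TW (p+2)) = (p:ℤ)+3 := by rw [disc_TW]; push_cast; ring
    have hdiscTWt : disc (TW (p+2)).tail = (p:ℤ)+2 := by
      rw [tail_TW, show p+2-1 = p+1 from rfl, disc_replicate_two]; push_cast; ring
    have hdiscTW' : disc (TW (p+1)) = (p:ℤ)+2 := by rw [disc_TW]; push_cast; ring
    have hdiscTWt' : disc (TW (p+1)).tail = (p:ℤ)+1 := by
      rw [tail_TW, show p+1-1 = p from rfl, disc_replicate_two]
    -- key disc values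
    have hQrec1 : disc (List.replicate (j+2) ((p:ℤ)+3))
        = ((p:ℤ)+3) * disc (List.replicate (j+1) ((p:ℤ)+3)) - Rfun ((p:ℤ)+3) (j+1) :=
      disc_replicate_rec _ (j+1)
    have hQrec0 : disc (List.replicate (j+1) ((p:ℤ)+3))
        = ((p:ℤ)+3) * disc (List.replicate j ((p:ℤ)+3)) - Rfun ((p:ℤ)+3) j :=
      disc_replicate_rec _ j
    have hR : Rfun ((p:ℤ)+3) (j+1) = disc (List.replicate j ((p:ℤ)+3)) := rfl
    have htail' : (sprod A (TW (p+2))).tail = sprod A.tail (TW (p+2)) :=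
      tail_sprod A (TW (p+2)) htne
    have hdrop' : (sprod A (TW (p+2))).dropLast = sprod A (TW (p+1)) :=
      dropLast_sprod_TW A p
    have htaildrop' : (sprod A (TW (p+2))).tail.dropLast = sprod A.tail (TW (p+1)) := by
      rw [htail', dropLast_sprod_TW A.tail p]
    have hdA := disc_sprod A (TW (p+2)) hne hTWne
    have hdAt := disc_sprod A.tail (TW (p+2)) htne hTWne
    have hdAd := disc_sprod A (TW (p+1)) hne hTWne'
    have hdAtd := disc_sprod A.tail (TW (p+1)) htne hTWne'
    refine ⟨by rw [hstep]; exact sprod_ne_nil _ _,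
      by rw [hstep, htail']; exact sprod_ne_nil _ _, ?_, ?_, ?_, ?_⟩
    · rw [hstep, hdA, hdiscTW, hdiscTWt, hu, hw]
      rw [hQrec1, hR]
      ring
    · rw [hstep, htail', hdAt, hdiscTW, hdiscTWt, hv, hx]
      rw [hQrec1, hR]
      -- target uses hQrec0 linearly
      linear_combination (1:ℤ) * hQrec0
    · rw [hstep, hdrop', hdAd, hdiscTW', hdiscTWt', hu, hw]
      rw [hQrec1, hR]
      ring
    · rw [hstep, htaildrop', hdAtd, hdiscTW', hdiscTWt', hv, hx]
      rw [hQrec1, hR]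
      linear_combination (1:ℤ) * hQrec0

/-! ### misc list helpers -/

lemma head!_mem (l : List ℤ) (h : l ≠ []) : l.head! ∈ l := by
  obtain ⟨a, t, rfl⟩ := List.exists_cons_of_ne_nil h
  simp

lemma dropLast_cons_of_ne_nil (a : ℤ) (t : List ℤ) (ht : t ≠ []) :
    (a :: t).dropLast = a :: t.dropLast := by
  cases t with
  | nil => exact absurd rfl ht
  | cons b s => simp [List.dropLast]

lemma dropLast_cons_concat (x : ℤ) (Y : List ℤ) (z : ℤ) :
    (x :: (Y ++ [z])).dropLast = x :: Y := by
  rw [show x :: (Y ++ [z]) = (x :: Y) ++ [z] by simp, List.dropLast_concat]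

lemma getLast!_replicate (j : ℕ) (a : ℤ) (hj : 1 ≤ j) :
    (List.replicate j a).getLast! = a := by
  obtain ⟨i, rfl⟩ : ∃ i, j = i + 1 := ⟨j - 1, by omega⟩
  rw [List.replicate_succ', getLast!_concat]

/-! ### the word equation -/

lemma word_main (p : ℕ) :
    ∀ (r : ℕ) (A : List ℤ), A.length ≤ r → A ≠ [] → (∀ a ∈ A, 2 ≤ a) →
      A.dropLast ++ (A.getLast! + 1) :: List.replicate (p+1) (2:ℤ)
        = List.replicate (p+1) (2:ℤ) ++ (A.head! + 1) :: A.tail →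
      ∃ k, 1 ≤ k ∧ A = sprodPow (TW (p+2)) k := by
  intro r
  induction r with
  | zero => intro A hlen hA _ _; exact absurd (List.length_eq_zero_iff.mp (by omega)) hA
  | succ r ih =>
    intro A hlen hAne hAge h
    rw [show A.dropLast ++ (A.getLast! + 1) :: List.replicate (p+1) (2:ℤ)
        = (A.dropLast ++ [A.getLast! + 1]) ++ List.replicate (p+1) (2:ℤ) by simp] at h
    have hApos : 1 ≤ A.length := List.length_pos_iff.mpr hAne
    have hlenA' : (A.dropLast ++ [A.getLast! + 1]).length = A.length := by
      simp [List.length_dropLast]; omega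
    have hTlen : (List.replicate (p+1) (2:ℤ)).length = p + 1 := by simp
    -- Step 1: p + 2 ≤ A.length
    have hge : p + 2 ≤ A.length := by
      by_contra hc
      push_neg at hc
      have h1 : ((A.dropLast ++ [A.getLast! + 1]) ++ List.replicate (p+1) (2:ℤ)).take A.length
          = A.dropLast ++ [A.getLast! + 1] := List.take_left' hlenA'
      rw [h, List.take_append_of_le_length (by omega), List.take_replicate] at h1
      have hlast : (A.dropLast ++ [A.getLast! + 1]).getLast! = 2 := by
        rw [← h1, getLast!_replicate _ _ (by omega)]
      rw [getLast!_concat] at hlast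
      have := hAge A.getLast! (getLast!_mem A hAne)
      omega
    -- Step 2: extract C
    have htake : (A.dropLast ++ [A.getLast! + 1]).take (p+1) = List.replicate (p+1) (2:ℤ) := by
      have h1 : ((A.dropLast ++ [A.getLast! + 1]) ++ List.replicate (p+1) (2:ℤ)).take (p+1)
          = (A.dropLast ++ [A.getLast! + 1]).take (p+1) :=
        List.take_append_of_le_length (by omega)
      rw [h, List.take_left' hTlen] at h1
      exact h1.symm
    have hTC : A.dropLast ++ [A.getLast! + 1]
        = List.replicate (p+1) (2:ℤ) ++ (A.dropLast ++ [A.getLast! + 1]).drop (p+1) := by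
      conv_lhs => rw [← List.take_append_drop (p+1) (A.dropLast ++ [A.getLast! + 1])]
      rw [htake]
    have hCne : (A.dropLast ++ [A.getLast! + 1]).drop (p+1) ≠ [] := by
      intro hc
      have := congrArg List.length hc
      simp [List.length_drop] at this
      omega
    have hCA : (A.head! + 1) :: A.tail
        = (A.dropLast ++ [A.getLast! + 1]).drop (p+1) ++ List.replicate (p+1) (2:ℤ) := by
      apply List.append_cancel_left (as := List.replicate (p+1) (2:ℤ))
      rw [← h]
      conv_lhs => rw [hTC]
      rw [List.append_assoc]
    obtain ⟨c, C₁, hCeq⟩ := List.exists_cons_of_ne_nil hCne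
    cases C₁ with
    | nil =>
      -- A = TW (p+2)
      rw [hCeq] at hCA hTC
      obtain ⟨a, t, hAat⟩ := List.exists_cons_of_ne_nil hAne
      have hhead : A.head! = a := by rw [hAat]; rfl
      have htail : A.tail = t := by rw [hAat]; rfl
      rw [hhead, htail] at hCA
      simp only [List.cons_append, List.nil_append] at hCA
      have hac : a + 1 = c := (List.cons.injEq _ _ _ _).mp hCA |>.1
      have ht : t = List.replicate (p+1) (2:ℤ) := (List.cons.injEq _ _ _ _).mp hCA |>.2
      -- now use hTC to show a = 2
      have hdl : A.dropLast = a :: t.dropLast := by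
        rw [hAat]; exact dropLast_cons_of_ne_nil a t (by rw [ht]; intro hh; have := congrArg List.length hh; simp at this)
      rw [hdl] at hTC
      have : a = 2 := by
        have h2 := congrArg List.head? hTC
        simp [List.replicate_succ] at h2
        exact h2
      refine ⟨1, le_rfl, ?_⟩
      rw [sprodPow_one]
      rw [hAat, ht, this]
      show 2 :: List.replicate (p+1) (2:ℤ) = TW (p+2)
      rw [← List.replicate_succ]
      rfl
    | cons c₂ C₂' =>
      -- C = c :: C₂ ++ [e]
      obtain ⟨C₂, e, hC₁⟩ : ∃ (C₂ : List ℤ) (e : ℤ), c₂ :: C₂' = C₂ ++ [e] := by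
        refine ⟨(c₂ :: C₂').dropLast, (c₂ :: C₂').getLast (by simp), ?_⟩
        rw [List.dropLast_append_getLast]
      rw [hC₁] at hCeq
      rw [hCeq] at hCA hTC
      -- (ii): A.dropLast = T ++ c :: C₂ and A.getLast! + 1 = e
      have hsplit : A.dropLast = List.replicate (p+1) (2:ℤ) ++ c :: C₂ ∧ [A.getLast! + 1] = [e] := by
        apply List.append_inj'
        · rw [hTC]; simp
        · simp
      have he : A.getLast! + 1 = e := by
        have := hsplit.2; simpa using this
      -- (i): A.head! = c - 1, A.tail = C₂ ++ [e] ++ T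
      have hheadA : A.head! + 1 = c ∧ A.tail = (C₂ ++ [e]) ++ List.replicate (p+1) (2:ℤ) := by
        have := hCA
        simp only [List.cons_append, List.append_assoc] at this
        constructor
        · exact ((List.cons.injEq _ _ _ _).mp this).1
        · have h2 := ((List.cons.injEq _ _ _ _).mp this).2
          rw [h2]; simp
      -- two expressions for A
      have hAeq1 : A = (A.head! :: (C₂ ++ [e])) ++ List.replicate (p+1) (2:ℤ) := by
        conv_lhs => rw [← List.cons_head!_tail hAne]
        rw [hheadA.2]
        simp
      have hAeq2 : A = (List.replicate (p+1) (2:ℤ) ++ c :: C₂) ++ [A.getLast!] := by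
        conv_lhs => rw [eq_dropLast_concat_getLast! A hAne]
        rw [hsplit.1]
      -- define Z
      set Z : List ℤ := (c - 1) :: (C₂ ++ [A.getLast!]) with hZdef
      have hch : A.head! = c - 1 := by have := hheadA.1; omega
      have hZne : Z ≠ [] := by simp [hZdef]
      have hZdl : Z.dropLast = (c - 1) :: C₂ := dropLast_cons_concat _ _ _
      have hZlast : Z.getLast! = A.getLast! := by
        rw [hZdef, getLast!_cons _ _ (by simp), getLast!_concat]
      have hZhead : Z.head! = c - 1 := rfl
      have hZtail : Z.tail = C₂ ++ [A.getLast!] := rfl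
      have hZA1 : Z.dropLast ++ (Z.getLast! + 1) :: List.replicate (p+1) (2:ℤ) = A := by
        rw [hZdl, hZlast, he, hAeq1, hch]
        simp
      have hZA2 : List.replicate (p+1) (2:ℤ) ++ (Z.head! + 1) :: Z.tail = A := by
        rw [hZhead, hZtail, show c - 1 + 1 = c from by ring]
        conv_rhs => rw [hAeq2]
        simp
      have hZeq : Z.dropLast ++ (Z.getLast! + 1) :: List.replicate (p+1) (2:ℤ)
          = List.replicate (p+1) (2:ℤ) ++ (Z.head! + 1) :: Z.tail := hZA1.trans hZA2.symm
      have hZge : ∀ x ∈ Z, 2 ≤ x := by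
        intro x hx
        rw [hZdef] at hx
        simp only [List.mem_cons, List.mem_append, List.mem_singleton] at hx
        rcases hx with hx1 | hx | hx3
        · have := hAge A.head! (head!_mem A hAne)
          omega
        · apply hAge
          rw [hAeq2]
          simp [hx]
        · rcases hx3 with hx3 | h0
          · have := hAge A.getLast! (getLast!_mem A hAne)
            omega
          · simp at h0
      have hZlen : Z.length ≤ r := by
        have hlA := congrArg List.length hAeq1
        simp at hlA
        have : Z.length = C₂.length + 2 := by simp [hZdef]
        omega
      obtain ⟨k, hk, hZk⟩ := ih Z hZlen hZne hZge hZeq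
      refine ⟨k + 1, by omega, ?_⟩
      rw [sprodPow_succ _ k hk, ← hZk]
      unfold sprod
      rw [head!_TW _ (by omega), tail_TW, show p + 2 - 1 = p + 1 from rfl,
        show Z.getLast! + 2 - 1 = Z.getLast! + 1 from by ring]
      exact hZA1.symm
  

/-! ### final assembly helpers -/

lemma sprodPow_TW1 : ∀ k : ℕ, 1 ≤ k → sprodPow (TW 1) k = [(k:ℤ)+1] := by
  intro k
  induction k with
  | zero => intro hk; omega
  | succ k ihk =>
    intro _
    rcases Nat.eq_zero_or_pos k with rfl | hk
    · rw [sprodPow_one]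
      show TW 1 = [(1:ℤ)+1]
      norm_num [TW, List.replicate]
    · rw [sprodPow_succ _ k hk, ihk hk]
      show sprod [(k:ℤ)+1] (TW 1) = _
      rw [show TW 1 = [(2:ℤ)] from rfl, sprod_singleton]
      push_cast
      ring_nf

lemma tail_reverse (l : List ℤ) : l.reverse.tail = l.dropLast.reverse := by
  rcases eq_or_ne l [] with rfl | hl
  · rfl
  · conv_lhs => rw [← List.dropLast_append_getLast hl]
    rw [List.reverse_append]
    simp

lemma inductance_reverse (l : List ℤ) :
    inductance l.reverse = (disc l.dropLast : ℚ) / (disc l : ℚ) := by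
  rw [inductance, tail_reverse, disc_reverse, disc_reverse]

lemma admissible_replicate (k : ℕ) (c : ℤ) (hk : 1 ≤ k) (hc : 2 ≤ c) :
    Admissible (List.replicate k c) := by
  constructor
  · intro hh
    have := congrArg List.length hh
    simp at this
    omega
  · intro x hx
    rw [List.eq_of_mem_replicate hx]
    exact hc

lemma inductance_replicate (k : ℕ) (c : ℤ) :
    inductance (List.replicate (k+1) c)
      = (disc (List.replicate k c) : ℚ) / (disc (List.replicate (k+1) c) : ℚ) := by
  rw [inductance, List.tail_replicate]
  norm_num

theorem eq_sprodPow_of_sprod_TW_comm_aux (A B : List ℤ)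
    (hA : Admissible A) (hB : Admissible B)
    (hAB : inductance B = 1 - inductance A.reverse)
    (m n : ℕ) (hm : 0 < m) (hn : 0 < n)
    (h : sprod A (TW m) = sprod (TW n) A) :
    m = n ∧ A = sprodPow (TW n) B.length := by
  have hTWm : (TW m).length = m := by simp [TW]
  have hTWn : (TW n).length = n := by simp [TW]
  have hmn : m = n := by
    have hl := congrArg List.length h
    have h1 := length_sprod A (TW m) hA.1 (TW_ne_nil m hm)
    have h2 := length_sprod (TW n) A (TW_ne_nil n hn) hA.1
    omega
  subst hmn
  refine ⟨rfl, ?_⟩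
  rcases Nat.lt_or_ge m 2 with hm2 | hm2
  · -- case n = 1
    have hm1 : m = 1 := by omega
    subst hm1
    obtain ⟨a, t, rfl⟩ := List.exists_cons_of_ne_nil hA.1
    have ha : 2 ≤ a := hA.2 a (by simp)
    cases t with
    | cons c t' =>
      exfalso
      have hform : sprod (a :: c :: t') (TW 1)
          = (a :: (c :: t').dropLast) ++ [(a :: c :: t').getLast! + 1] := by
        unfold sprod
        rw [show (TW 1).head! = 2 from rfl, show (TW 1).tail = [] from rfl,
          dropLast_cons_of_ne_nil a (c :: t') (by simp)]
        rw [show (a :: c :: t').getLast! + 2 - 1 = (a :: c :: t').getLast! + 1 from by ring]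
      have hform2 : sprod (TW 1) (a :: c :: t') = (2 + a - 1) :: c :: t' := by
        rw [show TW 1 = [(2:ℤ)] from rfl, sprod_singleton]
      rw [hform, hform2] at h
      have := congrArg List.head? h
      simp at this
      omega
    | nil =>
      -- A = [a]
      set k : ℕ := (a - 1).toNat with hkdef
      have hkcast : (k : ℤ) = a - 1 := Int.toNat_of_nonneg (by omega)
      have hk1 : 1 ≤ k := by omega
      have hApow : [a] = sprodPow (TW 1) k := by
        rw [sprodPow_TW1 k hk1, hkcast]
        norm_num
      -- inductance computation
      have hindA : inductance ([a].reverse) = 1 / (a : ℚ) := by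
        rw [inductance_reverse]
        simp [List.dropLast, disc_nil, disc_singleton]
      have haQ : ((a : ℚ)) ≠ 0 := by
        have : (0:ℚ) < (a:ℚ) := by exact_mod_cast (by omega : (0:ℤ) < a)
        exact this.ne'
      have hBrep : inductance B = inductance (List.replicate k (2:ℤ)) := by
        rw [hAB, hindA]
        obtain ⟨j, hj⟩ : ∃ j, k = j + 1 := ⟨k - 1, by omega⟩
        rw [hj, inductance_replicate, disc_replicate_two, disc_replicate_two]
        have hja : ((j:ℤ)) = a - 2 := by omega
        push_cast
        rw [show ((j:ℚ)) = (a:ℚ) - 2 from by exact_mod_cast hja,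
          show (a:ℚ) - 2 + 1 = (a:ℚ) - 1 from by ring]
        rw [show (a:ℚ) - 1 + 1 = (a:ℚ) from by ring]
        rw [eq_div_iff haQ, sub_mul, one_mul, one_div, inv_mul_cancel₀ haQ]
      have hBeq : B = List.replicate k (2:ℤ) :=
        admissible_inductance_inj B _ hB (admissible_replicate k 2 hk1 le_rfl) hBrep
      rw [hBeq]
      simpa using hApow
  · -- case n ≥ 2
    obtain ⟨p, rfl⟩ : ∃ p, m = p + 2 := ⟨m - 2, by omega⟩
    have hword : A.dropLast ++ (A.getLast! + 1) :: List.replicate (p+1) (2:ℤ)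
        = List.replicate (p+1) (2:ℤ) ++ (A.head! + 1) :: A.tail := by
      have hL : sprod A (TW (p+2))
          = A.dropLast ++ (A.getLast! + 1) :: List.replicate (p+1) (2:ℤ) := by
        unfold sprod
        rw [head!_TW _ (by omega), tail_TW, show p + 2 - 1 = p + 1 from rfl,
          show A.getLast! + 2 - 1 = A.getLast! + 1 from by ring]
      have hR : sprod (TW (p+2)) A
          = List.replicate (p+1) (2:ℤ) ++ (A.head! + 1) :: A.tail := by
        unfold sprod
        rw [getLast!_TW _ (by omega), dropLast_TW, show p + 2 - 1 = p + 1 from rfl,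
          show (2:ℤ) + A.head! - 1 = A.head! + 1 from by ring]
      rw [← hL, ← hR, h]
    obtain ⟨k, hk1, hAk⟩ := word_main p A.length A le_rfl hA.1 hA.2 hword
    obtain ⟨j, rfl⟩ : ∃ j, k = j + 1 := ⟨k - 1, by omega⟩
    obtain ⟨hne, htne, hu, hv, hw, hx⟩ := sprodPow_TW_facts p j
    -- inductance of A.reverse
    have hQpos : 0 < disc (List.replicate (j+1) ((p:ℤ)+3)) :=
      admissible_disc_pos _ (admissible_replicate (j+1) _ (by omega) (by omega))
    have hQne : ((disc (List.replicate (j+1) ((p:ℤ)+3)) : ℚ)) ≠ 0 := by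
      exact_mod_cast hQpos.ne'
    have hindA : inductance A.reverse
        = ((disc (List.replicate (j+1) ((p:ℤ)+3)) - disc (List.replicate j ((p:ℤ)+3)) : ℤ) : ℚ)
          / ((disc (List.replicate (j+1) ((p:ℤ)+3)) : ℤ) : ℚ) := by
      rw [inductance_reverse, hAk, hw, hu]
    have hBrep : inductance B = inductance (List.replicate (j+1) ((p:ℤ)+3)) := by
      rw [hAB, hindA, inductance_replicate]
      push_cast
      field_simp
      ring
    have hBeq : B = List.replicate (j+1) ((p:ℤ)+3) :=
      admissible_inductance_inj B _ hB (admissible_replicate (j+1) _ (by omega) (by omega)) hBrep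
    rw [hBeq]
    simpa using hAk

/-- Lemma 2.3 (iii), second half: if `A` is an admissible linear chain, `B = A*`,
and `m`, `n` are positive integers with `A ∗ TWₘ = TWₙ ∗ A`, then `m = n` and
`A = TWₙ^{∗ r(A*)}`, the `r(A*)`-fold `∗`-product of `TWₙ` with itself. -/
theorem eq_sprodPow_of_sprod_TW_comm (A B : List ℤ)
    (hA : Admissible A) (hB : Admissible B)
    (hAB : inductance B = 1 - inductance A.reverse)
    (m n : ℕ) (hm : 0 < m) (hn : 0 < n)
    (h : sprod A (TW m) = sprod (TW n) A) :
    m = n ∧ A = sprodPow (TW n) B.length := by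
  exact eq_sprodPow_of_sprod_TW_comm_aux A B hA hB hAB m n hm hn h
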